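/- Under linearly decreasing incidence λ(s) = λ + ρ(t−s) with λ, ρ > 0 and constant prevalence p ∈ (0,1), the equation ∫_{t−c}^{T} (λ(s)(1−p)/p) ds = e (where c solves the same integral over [t−c, t] equal to 1) has solution T = t − (√(λ² + 2ρ·(p/(1−p))·(1−e)) − λ)/ρ for e ∈ [0,1]. -/

import Mathlib

open MeasureTheory Set intervalIntegral

/-- Linearly decreasing incidence: closed-form infection time solving the
simulation integral equation. -/
theorem linear_incidence_simulation (lam ρ p t c : ℝ)
    (hlam : 0 < lam) (hρ : 0 < ρ) (hp : 0 < p) (hp1 : p < 1) (hcpos : 0 < c)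
    (hc : lam * c + ρ * c ^ 2 / 2 = p / (1 - p)) :
    ∀ e ∈ Icc (0:ℝ) 1,
      (∫ s in (t - c)..(t - (Real.sqrt (lam ^ 2 + 2 * ρ * (p / (1 - p)) * (1 - e)) - lam) / ρ),
        (lam + ρ * (t - s)) * (1 - p) / p) = e := by
  intro e he
  obtain ⟨he0, he1⟩ := he
  have hp' : (1 : ℝ) - p > 0 := by linarith
  set K : ℝ := p / (1 - p) with hK
  have hKpos : 0 < K := div_pos hp hp'
  set D : ℝ := lam ^ 2 + 2 * ρ * K * (1 - e) with hD
  have hDnn : 0 ≤ D := by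
    have : 0 ≤ 2 * ρ * K * (1 - e) :=
      mul_nonneg (by positivity) (by linarith)
    nlinarith [sq_nonneg lam]
  have hs : Real.sqrt D ^ 2 = D := Real.sq_sqrt hDnn
  set b : ℝ := t - (Real.sqrt D - lam) / ρ with hb
  have hA : (∫ s in (t - c)..b, (lam + ρ * (t - s)) * (1 - p) / p)
      = ∫ s in (t - c)..b, ((lam + ρ * t) * (1 - p) / p) + (-(ρ * (1 - p) / p)) * s := by
    apply intervalIntegral.integral_congr
    intro s _
    ring
  rw [hA, intervalIntegral.integral_add (g := fun s : ℝ => (-(ρ * (1 - p) / p)) * s) intervalIntegrable_const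
      ((continuous_const.mul continuous_id').intervalIntegrable _ _),
    intervalIntegral.integral_const, intervalIntegral.integral_const_mul,
    integral_id]
  have hu : lam * ((Real.sqrt D - lam) / ρ) + ρ * ((Real.sqrt D - lam) / ρ) ^ 2 / 2
      = K * (1 - e) := by
    field_simp
    nlinarith [hs]
  have hKe : (1 - p) / p * K = 1 := by
    rw [hK]; field_simp
  have hρ' := hρ.ne'
  have hp0 := hp.ne'
  rw [smul_eq_mul]
  calc (b - (t - c)) * ((lam + ρ * t) * (1 - p) / p)
        + -(ρ * (1 - p) / p) * ((b ^ 2 - (t - c) ^ 2) / 2)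
      = (1 - p) / p * ((lam * c + ρ * c ^ 2 / 2)
          - (lam * ((Real.sqrt D - lam) / ρ)
            + ρ * ((Real.sqrt D - lam) / ρ) ^ 2 / 2)) := by
        rw [hb]; field_simp; ring
    _ = (1 - p) / p * (K - K * (1 - e)) := by rw [hc, hu]
    _ = e := by rw [hK]; field_simp; ring
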